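/- Let R be a commutative ring of characteristic 0 (or containing ℚ), A = R[t], ∂ = d/dt and ∂_# = t·∂. Define the divided log-differential operators ∂_#^{[k]} := t^k ∂^{[k]} where ∂^{[k]} = ∂^k/k!. Then for all k, h ∈ ℕ, the composite ∂_#^{[k]} ∘ ∂_#^{[h]} equals ∑_{i=0}^{min(k,h)} c_i · ∂_#^{[k+h-i]} for suitable coefficients c_i ∈ ℤ, and in particular ∂_#^{[k]} ∘ ∂_#^{[h]} − ((k+h) choose k) ∂_#^{[k+h]} is a ℤ-linear combination of operators ∂_#^{[j]} with j < k + h. -/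

import Mathlib

open Polynomial

noncomputable def dividedLogDiff (K : Type*) [Field K] [CharZero K] (k : ℕ)
    (p : Polynomial K) : Polynomial K :=
  (k.factorial : K)⁻¹ • (Polynomial.X ^ k * (⇑Polynomial.derivative)^[k] p)

lemma coeff_dividedLogDiff (K : Type*) [Field K] [CharZero K] (k n : ℕ) (p : Polynomial K) :
    (dividedLogDiff K k p).coeff n = (n.choose k : K) * p.coeff n := by
  unfold dividedLogDiff
  rw [Polynomial.coeff_smul, Polynomial.coeff_X_pow_mul']
  by_cases hkn : k ≤ n
  · rw [if_pos hkn, Polynomial.coeff_iterate_derivative, Nat.sub_add_cancel hkn,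
      Nat.descFactorial_eq_factorial_mul_choose, nsmul_eq_mul]
    have hf : (k.factorial : K) ≠ 0 := Nat.cast_ne_zero.mpr k.factorial_ne_zero
    push_cast
    field_simp
    rw [smul_eq_mul]
    field_simp
  · rw [if_neg hkn, Nat.choose_eq_zero_of_lt (by omega), Nat.cast_zero, smul_zero, zero_mul]

lemma nat_identity (n k h : ℕ) :
    ∑ i ∈ Finset.range (min k h + 1),
      (k + h - i).choose k * k.choose i * n.choose (k + h - i) =
      n.choose k * n.choose h := by
  by_cases hkn : k ≤ n
  · have step : ∀ i ∈ Finset.range (min k h + 1),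
        (k + h - i).choose k * k.choose i * n.choose (k + h - i) =
        n.choose k * ((n - k).choose (h - i) * k.choose i) := by
      intro i hi
      rw [Finset.mem_range] at hi
      have hih : i ≤ h := by omega
      by_cases hn : k + h - i ≤ n
      · have := Nat.choose_mul (n := n) (k := k + h - i) (s := k) (by omega)
        have hsub : k + h - i - k = h - i := by omega
        rw [hsub] at this
        calc (k + h - i).choose k * k.choose i * n.choose (k + h - i)
            = n.choose (k + h - i) * (k + h - i).choose k * k.choose i := by ring
          _ = n.choose k * (n - k).choose (h - i) * k.choose i := by rw [this]
          _ = n.choose k * ((n - k).choose (h - i) * k.choose i) := by ring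
      · rw [Nat.choose_eq_zero_of_lt (show n < k + h - i by omega),
          Nat.choose_eq_zero_of_lt (show n - k < h - i by omega)]
        ring
    rw [Finset.sum_congr rfl step, ← Finset.mul_sum]
    congr 1
    have vdm := Nat.add_choose_eq k (n - k) h
    rw [Nat.add_sub_cancel' hkn, Finset.Nat.sum_antidiagonal_eq_sum_range_succ_mk] at vdm
    rw [vdm]
    symm
    calc ∑ i ∈ Finset.range h.succ, k.choose (i, h - i).1 * (n - k).choose (i, h - i).2
        = ∑ i ∈ Finset.range (h + 1), k.choose i * (n - k).choose (h - i) := rfl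
      _ = ∑ i ∈ Finset.range (min k h + 1), k.choose i * (n - k).choose (h - i) := by
          symm
          apply Finset.sum_subset
          · intro i hi
            rw [Finset.mem_range] at hi ⊢
            omega
          · intro i hi hni
            rw [Finset.mem_range] at hi hni
            have : k < i := by omega
            rw [Nat.choose_eq_zero_of_lt this, zero_mul]
      _ = ∑ i ∈ Finset.range (min k h + 1), (n - k).choose (h - i) * k.choose i :=
          Finset.sum_congr rfl (fun i _ => mul_comm _ _)
  · have : ∀ i ∈ Finset.range (min k h + 1),
        (k + h - i).choose k * k.choose i * n.choose (k + h - i) = 0 := by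
      intro i hi
      rw [Finset.mem_range] at hi
      rw [Nat.choose_eq_zero_of_lt (show n < k + h - i by omega), mul_zero]
    rw [Finset.sum_eq_zero this, Nat.choose_eq_zero_of_lt (by omega), zero_mul]

theorem dividedLogDiff_comp (K : Type*) [Field K] [CharZero K] (k h : ℕ) :
    ∃ c : ℕ → ℤ,
      (∀ p : Polynomial K,
        dividedLogDiff K k (dividedLogDiff K h p) =
          ∑ i ∈ Finset.range (min k h + 1), c i • dividedLogDiff K (k + h - i) p) ∧
      c 0 = (k + h).choose k := by
  refine ⟨fun i => ((k + h - i).choose k * k.choose i : ℤ), fun p => ?_, by simp⟩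
  ext n
  rw [Polynomial.finset_sum_coeff, coeff_dividedLogDiff, coeff_dividedLogDiff]
  have : ∀ i ∈ Finset.range (min k h + 1),
      ((((k + h - i).choose k * k.choose i : ℤ)) • dividedLogDiff K (k + h - i) p).coeff n =
      (((k + h - i).choose k * k.choose i * n.choose (k + h - i) : ℕ) : K) * p.coeff n := by
    intro i _
    rw [Polynomial.coeff_smul, coeff_dividedLogDiff, zsmul_eq_mul]
    push_cast
    ring
  rw [Finset.sum_congr rfl this, ← Finset.sum_mul, ← Nat.cast_sum, nat_identity]
  push_cast
  ring
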